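/- For all integers n ≥ 3 and d > n, the strict inequality π'(n,d) < π(n,d) holds. -/
import Mathlib


/-- `c(n,h) = C(n-1+h, h)`. -/
def c (n h : ℕ) : ℕ := (n - 1 + h).choose h

/-- Castelnuovo's bound `π(n,d) = Σ_{h≥1} (d - h(n-1) - 1)⁺` (finite truncation). -/
def piC (n d : ℕ) : ℕ := ∑ h ∈ Finset.Icc 1 d, (d - (h * (n - 1) + 1))

/-- `π'(n,d)` (finite truncation of `Σ_{h≥1} (d - c(n,h))⁺`). -/
def piC' (n d : ℕ) : ℕ :=
  if d < c n 2 then 0 else ∑ h ∈ Finset.Icc 1 d, (d - c n h)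

lemma aux_L1 (a : ℕ) : ∀ b : ℕ, b ≤ (a + b).choose (a + 1) := by
  intro b
  induction b with
  | zero => exact Nat.zero_le _
  | succ b ih =>
    have hp : (a + (b + 1)).choose (a + 1) = (a + b).choose a + (a + b).choose (a + 1) := by
      rw [show a + (b + 1) = (a + b) + 1 by ring, Nat.choose_succ_succ]
    have hpos : 0 < (a + b).choose a := Nat.choose_pos (Nat.le_add_right a b)
    omega

lemma aux_L2 (b : ℕ) : ∀ a : ℕ, a * b + 1 ≤ (a + b).choose a := by
  intro a
  induction a with
  | zero => simp
  | succ a ih =>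
    have hp : (a + 1 + b).choose (a + 1) = (a + b).choose a + (a + b).choose (a + 1) := by
      rw [show a + 1 + b = (a + b) + 1 by ring, Nat.choose_succ_succ]
    have h1 := aux_L1 a b
    have : (a + 1) * b = a * b + b := by ring
    omega

lemma c_ge (n h : ℕ) : h * (n - 1) + 1 ≤ c n h := by
  have := aux_L2 (n - 1) h
  unfold c
  rwa [add_comm (n - 1) h]

lemma c2_ge (n : ℕ) (hn : 3 ≤ n) : 2 * n ≤ c n 2 := by
  have h2 := aux_L2 (n - 1 - 1) 2
  have h1 := c_ge n 2
  have hc : c n 2 = (n - 1 + 2).choose 2 := rfl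
  have hp : (n - 1 + 2).choose 2 = (n - 1 + 1).choose 1 + (n - 1 + 1).choose 2 := by
    rw [show n - 1 + 2 = (n - 1 + 1) + 1 by ring, Nat.choose_succ_succ]
  have hq : (n - 1 + 1).choose 1 = n - 1 + 1 := Nat.choose_one_right _
  have hr : 2 * (n - 1 - 1) + 1 ≤ (n - 1 + 1).choose 2 := by
    rwa [show 2 + (n - 1 - 1) = n - 1 + 1 by omega] at h2
  omega

/-- For `n ≥ 3` and `d > n`, the strict inequality `π'(n,d) < π(n,d)` holds. -/
theorem piC'_lt_piC (n d : ℕ) (hn : 3 ≤ n) (hd : n < d) : piC' n d < piC n d := by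
  have hc2 := c2_ge n hn
  unfold piC' piC
  by_cases hcase : d < c n 2
  · rw [if_pos hcase]
    have hmem : 1 ∈ Finset.Icc 1 d := by simp [Finset.mem_Icc]; omega
    have hle : d - (1 * (n - 1) + 1) ≤ ∑ h ∈ Finset.Icc 1 d, (d - (h * (n - 1) + 1)) :=
      Finset.single_le_sum (f := fun h => d - (h * (n - 1) + 1)) (fun i _ => Nat.zero_le _) hmem
    omega
  · rw [if_neg hcase]
    push_neg at hcase
    apply Finset.sum_lt_sum
    · intro i _
      have := c_ge n i
      omega
    · refine ⟨2, by simp [Finset.mem_Icc]; omega, ?_⟩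
      omega
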